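/- For every integer q ≥ 4 and every proper coloring x ∈ {1,…,q}^n with n ≥ 1, ∑_{i=1}^n D(n−2i+1)·P(x̂_i) = 0. -/

import Mathlib

open Polynomial Polynomial.Chebyshev

/-- `C n = T_{|n|}(√q/2)`; Mathlib's `T` is even in its integer index. -/
noncomputable def C (q : ℝ) (n : ℤ) : ℝ := (T ℝ n).eval (Real.sqrt q / 2)

/-- `D n = √q · U_{n-1}(√q/2)`, the odd extension (`D 0 = 0`). -/
noncomputable def D (q : ℝ) (n : ℤ) : ℝ := Real.sqrt q * (U ℝ (n - 1)).eval (Real.sqrt q / 2)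

/-- A word is a proper coloring if no two consecutive letters are equal. -/
def Proper {q : ℕ} (x : List (Fin q)) : Prop := x.Chain' (· ≠ ·)

instance {q : ℕ} (x : List (Fin q)) : Decidable (Proper x) := by
  unfold Proper List.Chain'; infer_instance

/-- The recursively defined cylinder measure: `P [] = 1`, `P x = 0` for non-proper `x`,
and `P x = (1/D(n+1)) ∑_{i=1}^n C(n-2i+1) P(x̂ᵢ)` for proper `x` of length `n`,
where `x̂ᵢ` deletes the `i`-th letter (here indexed from `0`, so the coefficient of
`x.eraseIdx i` is `C(n - 2(i+1) + 1) = C(n - 2i - 1)`). -/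
noncomputable def P (q : ℕ) : List (Fin q) → ℝ
  | [] => 1
  | a :: l =>
    if Proper (a :: l) then
      (1 / D q (((a :: l).length : ℤ) + 1)) *
        ∑ i : Fin (a :: l).length,
          C q (((a :: l).length : ℤ) - 2 * (i : ℤ) - 1) * P q ((a :: l).eraseIdx i)
    else 0
termination_by x => x.length
decreasing_by
  have := i.isLt
  simp only [List.length_eraseIdx, this, if_pos]
  omega

/-! ### Auxiliary Chebyshev lemmas -/

theorem U_mul_T' (R : Type*) [CommRing R] (m k : ℤ) :
    2 * U R m * T R k = U R (m + k) + U R (m - k) := by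
  induction k using Polynomial.Chebyshev.induct with
  | zero => simp [two_mul]
  | one => rw [T_one]; linear_combination -(U_add_one R m)
  | add_two k ih1 ih2 =>
    have h₁ := U_add_two R (m + k)
    have h₂ := U_sub_two R (m - k)
    have h₃ := T_add_two R k
    linear_combination (norm := ring_nf) 2 * U R m * h₃ - h₂ - h₁ - ih2 + 2 * (X : R[X]) * ih1
  | neg_add_one k ih1 ih2 =>
    have h₁ := U_add_two R (m + (-k - 1))
    have h₂ := U_sub_two R (m - (-k - 1))
    have h₃ := T_add_two R (-k - 1)
    linear_combination (norm := ring_nf) 2 * U R m * h₃ - h₂ - h₁ - ih2 + 2 * (X : R[X]) * ih1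

theorem D_zero' (q : ℝ) : D q 0 = 0 := by
  simp [D, U_neg_one]

theorem D_neg' (q : ℝ) (n : ℤ) : D q (-n) = - D q n := by
  unfold D
  rw [U_neg_sub_one, eval_neg]
  ring

theorem cheb_key (q : ℝ) (a b : ℤ) :
    D q a * C q b - C q a * D q b = D q (a - b) := by
  unfold D _root_.C
  set s := Real.sqrt q / 2 with hs
  have hu : ∀ m k : ℤ, 2 * (U ℝ m).eval s * (T ℝ k).eval s
      = (U ℝ (m + k)).eval s + (U ℝ (m - k)).eval s := by
    intro m k
    have := congrArg (eval s) (U_mul_T' ℝ m k)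
    simpa using this
  have h1 := hu (a - 1) b
  have h2 := hu (b - 1) a
  have h3 : (U ℝ (b - 1 - a)).eval s = - (U ℝ (a - b - 1)).eval s := by
    have := U_neg_sub_two ℝ (a - b - 1)
    rw [show (-(a - b - 1) - 2 : ℤ) = b - 1 - a by ring] at this
    rw [this]; simp
  rw [show (a - 1 + b : ℤ) = b - 1 + a by ring, show (a - 1 - b : ℤ) = a - b - 1 by ring] at h1
  linear_combination (Real.sqrt q / 2) * h1 - (Real.sqrt q / 2) * h2 - (Real.sqrt q / 2) * h3

theorem D_pos (q : ℝ) (hq : (4:ℝ) ≤ q) (m : ℤ) (hm : 1 ≤ m) : 0 < D q m := by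
  have hs : (2:ℝ) ≤ Real.sqrt q := by
    have := Real.sqrt_le_sqrt hq
    rwa [show (4:ℝ) = 2^2 by norm_num, Real.sqrt_sq (by norm_num)] at this
  set u : ℕ → ℝ := fun k => (U ℝ (k:ℤ)).eval (Real.sqrt q / 2) with hu
  have hrec : ∀ k : ℕ, u (k+2) = Real.sqrt q * u (k+1) - u k := by
    intro k
    have := congrArg (eval (Real.sqrt q / 2)) (U_add_two ℝ (k:ℤ))
    simp only [eval_sub, eval_mul, eval_ofNat, eval_X] at this
    rw [show ((k:ℤ) + 2) = ((k+2:ℕ):ℤ) by push_cast; ring,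
      show ((k:ℤ) + 1) = ((k+1:ℕ):ℤ) by push_cast; ring] at this
    simp only [hu]
    rw [this]; ring
  have key : ∀ k : ℕ, 1 ≤ u k ∧ u k ≤ u (k+1) := by
    intro k
    induction k with
    | zero =>
      constructor
      · simp [hu, U_zero]
      · simp only [hu]
        rw [show ((0:ℕ):ℤ) = 0 by norm_num, show ((1:ℕ):ℤ) = 1 by norm_num, U_zero, U_one]
        simp only [eval_one, eval_mul, eval_ofNat, eval_X]
        nlinarith
    | succ k ih =>
      obtain ⟨h1, h2⟩ := ih
      refine ⟨by linarith, ?_⟩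
      rw [hrec k]
      nlinarith
  obtain ⟨k, rfl⟩ : ∃ k : ℕ, m = (k:ℤ) + 1 := ⟨(m-1).toNat, by omega⟩
  have hD : D q ((k:ℤ)+1) = Real.sqrt q * u k := by
    simp only [D, hu, add_sub_cancel_right]
  rw [hD]
  nlinarith [(key k).1]

/-! ### Auxiliary list lemmas -/

theorem eraseIdx_comm {α : Type*} (l : List α) : ∀ i j : ℕ, i ≤ j →
    (l.eraseIdx (j+1)).eraseIdx i = (l.eraseIdx i).eraseIdx j := by
  induction l with
  | nil => simp
  | cons a t ih =>
    intro i j h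
    cases i with
    | zero => simp
    | succ i' =>
      cases j with
      | zero => omega
      | succ j' =>
        simp only [List.eraseIdx_cons_succ]
        rw [ih i' j' (by omega)]

theorem proper_ne {q : ℕ} {l : List (Fin q)} (h : Proper l) {k : ℕ} (hk : k + 1 < l.length) :
    l[k]? ≠ l[k+1]? := by
  rw [Proper, List.Chain', List.isChain_iff_getElem] at h
  intro he
  rw [List.getElem?_eq_getElem (by omega), List.getElem?_eq_getElem hk] at he
  exact h k (by omega) (by simpa [List.get_eq_getElem] using he)

theorem not_proper_of {q : ℕ} {l : List (Fin q)} {k : ℕ} (hk : k + 1 < l.length)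
    (he : l[k]? = l[k+1]?) : ¬ Proper l := fun h => proper_ne h hk he

theorem not_proper_spec {q : ℕ} {l : List (Fin q)} (h : ¬ Proper l) :
    ∃ k, k + 1 < l.length ∧ l[k]? = l[k+1]? := by
  rw [Proper, List.Chain', List.isChain_iff_getElem] at h
  push_neg at h
  obtain ⟨k, hk, he⟩ := h
  refine ⟨k, by omega, ?_⟩
  rw [List.getElem?_eq_getElem (by omega), List.getElem?_eq_getElem (by omega)]
  simpa [List.get_eq_getElem] using he

theorem bad_spec {q : ℕ} {x : List (Fin q)} (hx : Proper x) {c : ℕ}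
    (hb : ¬ Proper (x.eraseIdx c)) :
    1 ≤ c ∧ c + 1 < x.length ∧ x[c-1]? = x[c+1]? := by
  have hcl : c < x.length := by
    by_contra hcl
    push_neg at hcl
    rw [List.eraseIdx_of_length_le hcl] at hb
    exact hb hx
  obtain ⟨k, hk, he⟩ := not_proper_spec hb
  rw [List.length_eraseIdx_of_lt hcl] at hk
  rw [List.getElem?_eraseIdx, List.getElem?_eraseIdx] at he
  by_cases h1 : k + 1 < c
  · rw [if_pos (by omega), if_pos h1] at he
    exact absurd he (proper_ne hx (by omega))
  · by_cases h2 : c ≤ k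
    · rw [if_neg (by omega), if_neg (by omega)] at he
      exact absurd he (proper_ne hx (by omega))
    · have hc : c = k + 1 := by omega
      subst hc
      rw [if_pos (by omega), if_neg (by omega)] at he
      exact ⟨by omega, by omega, by simpa using he⟩

theorem not_proper_erase {q : ℕ} {l : List (Fin q)} {k m : ℕ} (hk : k + 1 < l.length)
    (hm : m < l.length) (h1 : m ≠ k) (h2 : m ≠ k + 1) (he : l[k]? = l[k+1]?) :
    ¬ Proper (l.eraseIdx m) := by
  by_cases hmk : m < k
  · have e1 : (l.eraseIdx m)[k-1]? = l[k]? := by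
      rw [List.getElem?_eraseIdx_of_ge (by omega), show k - 1 + 1 = k by omega]
    have e2 : (l.eraseIdx m)[k-1+1]? = l[k+1]? := by
      rw [show k - 1 + 1 = k by omega, List.getElem?_eraseIdx_of_ge (by omega)]
    exact not_proper_of (k := k-1)
      (by rw [List.length_eraseIdx_of_lt hm]; omega)
      (e1.trans (he.trans e2.symm))
  · have hmk' : k + 1 < m := by omega
    have e1 : (l.eraseIdx m)[k]? = l[k]? := List.getElem?_eraseIdx_of_lt (by omega)
    have e2 : (l.eraseIdx m)[k+1]? = l[k+1]? := List.getElem?_eraseIdx_of_lt (by omega)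
    exact not_proper_of (k := k)
      (by rw [List.length_eraseIdx_of_lt hm]; omega)
      (e1.trans (he.trans e2.symm))

theorem erase2_eq {α : Type*} {l : List α} {j : ℕ} (he : l[j]? = l[j+2]?) :
    (l.eraseIdx j).eraseIdx j = (l.eraseIdx (j+1)).eraseIdx (j+1) := by
  apply List.ext_getElem?
  intro m
  simp only [List.getElem?_eraseIdx]
  rcases lt_trichotomy m j with h|h|h
  · simp only [if_pos h, if_pos (show m < j + 1 by omega)]
  · subst h
    simp only [if_neg (lt_irrefl m), if_neg (show ¬ m + 1 < m by omega),
      if_pos (Nat.lt_succ_self m)]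
    have e : m + 1 + 1 = m + 2 := rfl
    rw [e]
    exact he.symm
  · simp only [if_neg (show ¬ m < j by omega), if_neg (show ¬ m + 1 < j by omega),
      if_neg (show ¬ m < j + 1 by omega), if_neg (show ¬ m + 1 < j + 1 by omega)]

/-! ### Equations for `P` -/

theorem P_of_not_proper {q : ℕ} {y : List (Fin q)} (hy : y ≠ []) (h : ¬ Proper y) :
    P q y = 0 := by
  cases y with
  | nil => exact absurd rfl hy
  | cons a l => rw [P, if_neg h]

theorem P_proper (q : ℕ) (hq4 : (4:ℝ) ≤ (q:ℝ)) {y : List (Fin q)} (hy : Proper y)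
    (hl : 1 ≤ y.length) :
    D q ((y.length : ℤ) + 1) * P q y =
      ∑ j ∈ Finset.range y.length, C q ((y.length : ℤ) - 2 * (j:ℤ) - 1) * P q (y.eraseIdx j) := by
  obtain ⟨a, l, rfl⟩ : ∃ a l, y = a :: l := by
    cases y with
    | nil => simp at hl
    | cons a l => exact ⟨a, l, rfl⟩
  rw [P, if_pos hy]
  rw [Fin.sum_univ_eq_sum_range
    (fun j => C ↑q (((a::l).length : ℤ) - 2*(j:ℤ) - 1) * P q ((a::l).eraseIdx j)) _]
  have hD : D ↑q (((a::l).length:ℤ) + 1) ≠ 0 := ne_of_gt (D_pos _ hq4 _ (by omega))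
  rw [← mul_assoc, mul_one_div, div_self hD, one_mul]

theorem key_zero {q : ℕ} {x : List (Fin q)} (hx : Proper x) {p r : ℕ} (hpr : p + 2 ≤ r)
    (hr : r < x.length) (hbad : ¬ Proper (x.eraseIdx p) ∨ ¬ Proper (x.eraseIdx r)) :
    P q ((x.eraseIdx p).eraseIdx (r-1)) = 0 := by
  cases hbad with
  | inl hb =>
    obtain ⟨h1, h2, he⟩ := bad_spec hx hb
    have e1 : (x.eraseIdx p)[p-1]? = x[p-1]? := List.getElem?_eraseIdx_of_lt (by omega)
    have e2 : (x.eraseIdx p)[p-1+1]? = x[p+1]? := by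
      rw [show p-1+1 = p by omega, List.getElem?_eraseIdx_of_ge (le_refl p)]
    have hv : ¬ Proper ((x.eraseIdx p).eraseIdx (r-1)) :=
      not_proper_erase (k := p-1) (m := r-1)
        (by rw [List.length_eraseIdx_of_lt (by omega)]; omega)
        (by rw [List.length_eraseIdx_of_lt (by omega)]; omega)
        (by omega) (by omega)
        (e1.trans (he.trans e2.symm))
    exact P_of_not_proper (List.ne_nil_of_length_pos (by
      rw [List.length_eraseIdx_of_lt (by rw [List.length_eraseIdx_of_lt (by omega)]; omega),
        List.length_eraseIdx_of_lt (by omega)]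
      omega)) hv
  | inr hb =>
    obtain ⟨h1, h2, he⟩ := bad_spec hx hb
    have hcomm : (x.eraseIdx p).eraseIdx (r-1) = (x.eraseIdx r).eraseIdx p := by
      have h := eraseIdx_comm x p (r-1) (by omega)
      rw [show r-1+1 = r by omega] at h
      exact h.symm
    rw [hcomm]
    have e1 : (x.eraseIdx r)[r-1]? = x[r-1]? := List.getElem?_eraseIdx_of_lt (by omega)
    have e2 : (x.eraseIdx r)[r-1+1]? = x[r+1]? := by
      rw [show r-1+1 = r by omega, List.getElem?_eraseIdx_of_ge (le_refl r)]
    have hv : ¬ Proper ((x.eraseIdx r).eraseIdx p) :=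
      not_proper_erase (k := r-1) (m := p)
        (by rw [List.length_eraseIdx_of_lt (by omega)]; omega)
        (by rw [List.length_eraseIdx_of_lt (by omega)]; omega)
        (by omega) (by omega)
        (e1.trans (he.trans e2.symm))
    exact P_of_not_proper (List.ne_nil_of_length_pos (by
      rw [List.length_eraseIdx_of_lt (by rw [List.length_eraseIdx_of_lt (by omega)]; omega),
        List.length_eraseIdx_of_lt (by omega)]
      omega)) hv

theorem D_sum_eq_zero (q : ℕ) (hq : 4 ≤ q) (x : List (Fin q)) (hx : Proper x)
    (hn : 1 ≤ x.length) :
    ∑ i : Fin x.length, D q ((x.length : ℤ) - 2 * (i : ℤ) - 1) * P q (x.eraseIdx i) = 0 := by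
  have hq4 : (4:ℝ) ≤ (q:ℝ) := by exact_mod_cast hq
  rw [Fin.sum_univ_eq_sum_range
    (fun i => D ↑q ((x.length : ℤ) - 2 * (i:ℤ) - 1) * P q (x.eraseIdx i)) _]
  suffices H : ∀ n : ℕ, ∀ x : List (Fin q), x.length = n → Proper x → 1 ≤ x.length →
      ∑ i ∈ Finset.range x.length, D ↑q ((x.length : ℤ) - 2 * (i:ℤ) - 1) * P q (x.eraseIdx i) = 0
    from H x.length x rfl hx hn
  clear hx hn x
  intro n
  induction n using Nat.strong_induction_on with
  | _ n IH =>
  intro x hlen hx hn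
  subst hlen
  rcases Nat.lt_or_ge x.length 2 with hsmall | hbig
  · -- length 1 case
    have h1 : x.length = 1 := by omega
    rw [h1, Finset.sum_range_one]
    rw [show ((1:ℕ):ℤ) - 2*((0:ℕ):ℤ) - 1 = 0 by norm_num, D_zero', zero_mul]
  · -- main case
    set n := x.length with hnx
    have hDn : D ↑q (n:ℤ) ≠ 0 := ne_of_gt (D_pos _ hq4 _ (by omega))
    set g : ℕ → ℝ := fun i => if Proper (x.eraseIdx i) then (1:ℝ) else 0 with hg
    set e : ℕ → ℝ := fun i => D ↑q 1 * P q ((x.eraseIdx i).eraseIdx i) with he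
    set c : ℕ → ℝ := fun i => (g i - g (i+1)) * e i with hc
    set F : ℕ × ℕ → ℝ := fun p =>
      g p.1 * (D ↑q (2*(p.2:ℤ) - 2*(p.1:ℤ) + 1) * P q ((x.eraseIdx p.1).eraseIdx p.2)) with hF
    set σ : ℕ × ℕ → ℕ × ℕ := fun p => if p.1 ≤ p.2 then (p.2+1, p.1) else (p.2, p.1 - 1) with hσ
    set rect : Finset (ℕ × ℕ) := Finset.range n ×ˢ Finset.range (n-1) with hrect
    -- Step A
    have stepA : D ↑q (n:ℤ) * ∑ i ∈ Finset.range n, D ↑q ((n:ℤ) - 2*(i:ℤ) - 1) * P q (x.eraseIdx i)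
        = ∑ i ∈ Finset.range n, ∑ j ∈ Finset.range (n-1), F (i, j) := by
      rw [Finset.mul_sum]
      refine Finset.sum_congr rfl fun i hi => ?_
      rw [Finset.mem_range] at hi
      by_cases hp : Proper (x.eraseIdx i)
      · have hli : (x.eraseIdx i).length = n - 1 := by
          rw [List.length_eraseIdx_of_lt (by omega)]
        have hrec := P_proper q hq4 hp (by omega)
        rw [hli] at hrec
        rw [show ((n-1:ℕ):ℤ) + 1 = (n:ℤ) by omega] at hrec
        have hIH := IH (n-1) (by omega) (x.eraseIdx i) hli hp (by omega)
        rw [hli] at hIH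
        calc D ↑q (n:ℤ) * (D ↑q ((n:ℤ) - 2*(i:ℤ) - 1) * P q (x.eraseIdx i))
            = D ↑q ((n:ℤ) - 2*(i:ℤ) - 1) * (D ↑q (n:ℤ) * P q (x.eraseIdx i)) := by ring
          _ = D ↑q ((n:ℤ) - 2*(i:ℤ) - 1) *
                (∑ j ∈ Finset.range (n-1),
                  C ↑q (((n-1:ℕ):ℤ) - 2*(j:ℤ) - 1) * P q ((x.eraseIdx i).eraseIdx j)) := by
              rw [hrec]
          _ = D ↑q ((n:ℤ) - 2*(i:ℤ) - 1) *
                (∑ j ∈ Finset.range (n-1),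
                  C ↑q (((n-1:ℕ):ℤ) - 2*(j:ℤ) - 1) * P q ((x.eraseIdx i).eraseIdx j))
              - C ↑q ((n:ℤ) - 2*(i:ℤ) - 1) *
                (∑ j ∈ Finset.range (n-1),
                  D ↑q (((n-1:ℕ):ℤ) - 2*(j:ℤ) - 1) * P q ((x.eraseIdx i).eraseIdx j)) := by
              rw [hIH]; ring
          _ = ∑ j ∈ Finset.range (n-1),
                (D ↑q ((n:ℤ) - 2*(i:ℤ) - 1) *
                  (C ↑q (((n-1:ℕ):ℤ) - 2*(j:ℤ) - 1) * P q ((x.eraseIdx i).eraseIdx j))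
                - C ↑q ((n:ℤ) - 2*(i:ℤ) - 1) *
                  (D ↑q (((n-1:ℕ):ℤ) - 2*(j:ℤ) - 1) * P q ((x.eraseIdx i).eraseIdx j))) := by
              rw [Finset.mul_sum, Finset.mul_sum, ← Finset.sum_sub_distrib]
          _ = ∑ j ∈ Finset.range (n-1), F (i, j) := by
              refine Finset.sum_congr rfl fun j hj => ?_
              rw [Finset.mem_range] at hj
              simp only [hF, hg, if_pos hp, one_mul]
              have hk := cheb_key ↑q ((n:ℤ) - 2*(i:ℤ) - 1) (((n-1:ℕ):ℤ) - 2*(j:ℤ) - 1)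
              rw [show ((n:ℤ) - 2*(i:ℤ) - 1) - (((n-1:ℕ):ℤ) - 2*(j:ℤ) - 1)
                  = 2*(j:ℤ) - 2*(i:ℤ) + 1 by omega] at hk
              linear_combination P q ((x.eraseIdx i).eraseIdx j) * hk
      · have hne : x.eraseIdx i ≠ [] :=
          List.ne_nil_of_length_pos (by rw [List.length_eraseIdx_of_lt (by omega)]; omega)
        rw [P_of_not_proper hne hp]
        simp only [hF, hg, if_neg hp, zero_mul, mul_zero, Finset.sum_const_zero]
    -- involution facts
    have hmem : ∀ p ∈ rect, σ p ∈ rect := by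
      rintro ⟨i, j⟩ hp
      rw [hrect, Finset.mem_product, Finset.mem_range, Finset.mem_range] at hp ⊢
      obtain ⟨hi, hj⟩ := hp
      by_cases h : i ≤ j
      · simp only [hσ, if_pos h]
        exact ⟨by omega, by omega⟩
      · simp only [hσ, if_neg h]
        exact ⟨by omega, by omega⟩
    have hinv : ∀ p ∈ rect, σ (σ p) = p := by
      rintro ⟨i, j⟩ hp
      rw [hrect, Finset.mem_product, Finset.mem_range, Finset.mem_range] at hp
      by_cases h : i ≤ j
      · have e1 : σ (i, j) = (j+1, i) := by simp only [hσ]; rw [if_pos h]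
        have e2 : σ (j+1, i) = (i, j) := by
          simp only [hσ]
          rw [if_neg (by omega : ¬ (j+1 ≤ i))]
          rw [show j + 1 - 1 = j from rfl]
        rw [e1, e2]
      · have e1 : σ (i, j) = (j, i-1) := by simp only [hσ]; rw [if_neg h]
        have e2 : σ (j, i-1) = (i, j) := by
          simp only [hσ]
          rw [if_pos (by omega : j ≤ i - 1)]
          rw [show i - 1 + 1 = i by omega]
        rw [e1, e2]
    have hre : ∑ p ∈ rect, F p = ∑ p ∈ rect, F (σ p) :=
      Finset.sum_nbij' σ σ hmem hmem hinv hinv (fun p hp => by rw [hinv p hp])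
    -- Step B : termwise pairing
    have stepB : ∀ i j : ℕ, i < n → j < n - 1 →
        F (i,j) + F (σ (i,j)) = (if j = i then c i else 0) + (if i = j + 1 then c j else 0) := by
      intro i j hi hj
      by_cases hij : i ≤ j
      · have hσv : σ (i,j) = (j+1, i) := by simp only [hσ]; rw [if_pos hij]
        rw [hσv]
        have hcomm : (x.eraseIdx (j+1)).eraseIdx i = (x.eraseIdx i).eraseIdx j :=
          eraseIdx_comm x i j hij
        have hDn2 : D ↑q (2*(i:ℤ) - 2*((j+1:ℕ):ℤ) + 1) = - D ↑q (2*(j:ℤ) - 2*(i:ℤ) + 1) := by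
          rw [show (2*(i:ℤ) - 2*((j+1:ℕ):ℤ) + 1) = -(2*(j:ℤ) - 2*(i:ℤ) + 1) by push_cast; ring,
            D_neg']
        rcases eq_or_lt_of_le hij with heq | hlt
        · subst heq
          rw [if_pos rfl, if_neg (by omega : ¬ i = i + 1), add_zero]
          simp only [hF, hc, he]
          rw [hcomm, hDn2, show (2*(i:ℤ) - 2*(i:ℤ) + 1) = 1 by ring]
          ring
        · rw [if_neg (by omega : ¬ j = i), if_neg (by omega : ¬ i = j + 1), add_zero]
          simp only [hF]
          rw [hcomm, hDn2]
          by_cases hpi : Proper (x.eraseIdx i) <;> by_cases hpj : Proper (x.eraseIdx (j+1))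
          · simp only [hg, if_pos hpi, if_pos hpj]; ring
          · have h0 : P q ((x.eraseIdx i).eraseIdx j) = 0 := by
              have hz := key_zero hx (p := i) (r := j+1) (by omega) (by omega) (Or.inr hpj)
              rwa [show j + 1 - 1 = j by omega] at hz
            rw [h0]; ring
          · have h0 : P q ((x.eraseIdx i).eraseIdx j) = 0 := by
              have hz := key_zero hx (p := i) (r := j+1) (by omega) (by omega) (Or.inl hpi)
              rwa [show j + 1 - 1 = j by omega] at hz
            rw [h0]; ring
          · simp only [hg, if_neg hpi, if_neg hpj]; ring
      · have hij' : j < i := by omega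
        have hσv : σ (i,j) = (j, i-1) := by simp only [hσ]; rw [if_neg hij]
        rw [hσv]
        rcases Nat.eq_or_lt_of_le (show j + 1 ≤ i by omega) with heq | hlt
        · -- i = j + 1
          subst heq
          rw [if_neg (by omega : ¬ j = j + 1), if_pos rfl, zero_add]
          simp only [hF, hc, he]
          have hc2 : (x.eraseIdx (j+1)).eraseIdx j = (x.eraseIdx j).eraseIdx j :=
            eraseIdx_comm x j j (le_refl j)
          rw [show j + 1 - 1 = j from rfl, hc2,
            show (2*(j:ℤ) - 2*((j+1:ℕ):ℤ) + 1) = -(1:ℤ) by push_cast; ring, D_neg',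
            show (2*(j:ℤ) - 2*(j:ℤ) + 1) = (1:ℤ) by ring]
          ring
        · have hcomm : (x.eraseIdx j).eraseIdx (i-1) = (x.eraseIdx i).eraseIdx j := by
            have h := eraseIdx_comm x j (i-1) (by omega)
            rw [show i - 1 + 1 = i by omega] at h
            exact h.symm
          have hDn2 : D ↑q (2*((i-1:ℕ):ℤ) - 2*(j:ℤ) + 1) = - D ↑q (2*(j:ℤ) - 2*(i:ℤ) + 1) := by
            rw [show (2*((i-1:ℕ):ℤ) - 2*(j:ℤ) + 1) = -(2*(j:ℤ) - 2*(i:ℤ) + 1) by omega, D_neg']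
          rw [if_neg (by omega : ¬ j = i), if_neg (by omega : ¬ i = j + 1), add_zero]
          simp only [hF]
          rw [hcomm, hDn2]
          by_cases hpi : Proper (x.eraseIdx i) <;> by_cases hpj : Proper (x.eraseIdx j)
          · simp only [hg, if_pos hpi, if_pos hpj]; ring
          · have h0 : P q ((x.eraseIdx i).eraseIdx j) = 0 := by
              rw [← hcomm]
              exact key_zero hx (p := j) (r := i) (by omega) (by omega) (Or.inl hpj)
            rw [h0]; ring
          · have h0 : P q ((x.eraseIdx i).eraseIdx j) = 0 := by
              rw [← hcomm]
              exact key_zero hx (p := j) (r := i) (by omega) (by omega) (Or.inr hpi)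
            rw [h0]; ring
          · simp only [hg, if_neg hpi, if_neg hpj]; ring
    -- Step C : summing the paired terms
    have stepC : ∑ p ∈ rect, (F p + F (σ p)) = 2 * ∑ j ∈ Finset.range (n-1), c j := by
      have h0 : ∑ p ∈ rect, (F p + F (σ p))
          = ∑ p ∈ rect, ((if p.2 = p.1 then c p.1 else 0)
              + (if p.1 = p.2 + 1 then c p.2 else 0)) :=
        Finset.sum_congr rfl (fun p hp => by
          obtain ⟨i, j⟩ := p
          rw [hrect, Finset.mem_product, Finset.mem_range, Finset.mem_range] at hp
          exact stepB i j hp.1 hp.2)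
      rw [h0, Finset.sum_add_distrib]
      have hA : (∑ p ∈ rect, if p.2 = p.1 then c p.1 else 0)
          = ∑ j ∈ Finset.range (n-1), c j := by
        rw [hrect, Finset.sum_product]
        calc ∑ i ∈ Finset.range n, ∑ j ∈ Finset.range (n-1), (if j = i then c i else 0)
            = ∑ i ∈ Finset.range n, if i ∈ Finset.range (n-1) then c i else 0 :=
              Finset.sum_congr rfl fun i _ => Finset.sum_ite_eq' _ _ _
          _ = ∑ i ∈ Finset.range n ∩ Finset.range (n-1), c i := Finset.sum_ite_mem _ _ _
          _ = ∑ j ∈ Finset.range (n-1), c j := by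
              congr 1
              ext a
              simp only [Finset.mem_inter, Finset.mem_range]
              omega
      have hB : (∑ p ∈ rect, if p.1 = p.2 + 1 then c p.2 else 0)
          = ∑ j ∈ Finset.range (n-1), c j := by
        rw [hrect, Finset.sum_product]
        rw [Finset.sum_comm]
        calc ∑ j ∈ Finset.range (n-1), ∑ i ∈ Finset.range n, (if i = j + 1 then c j else 0)
            = ∑ j ∈ Finset.range (n-1), if j + 1 ∈ Finset.range n then c j else 0 :=
              Finset.sum_congr rfl fun j _ => Finset.sum_ite_eq' _ _ _
          _ = ∑ j ∈ Finset.range (n-1), c j := by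
              refine Finset.sum_congr rfl fun j hj => ?_
              rw [Finset.mem_range] at hj
              rw [if_pos (Finset.mem_range.mpr (by omega))]
      rw [hA, hB]; ring
    -- Step D : the boundary sum vanishes
    have stepD : ∑ j ∈ Finset.range (n-1), c j = 0 := by
      have hcb : ∀ j, c j = (if Proper (x.eraseIdx (j+1)) then (0:ℝ) else 1) * e j
          - (if Proper (x.eraseIdx j) then (0:ℝ) else 1) * e j := by
        intro j
        simp only [hc, hg]
        by_cases h1 : Proper (x.eraseIdx j) <;> by_cases h2 : Proper (x.eraseIdx (j+1)) <;>
          simp [h1, h2]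
      rw [Finset.sum_congr rfl fun j _ => hcb j, Finset.sum_sub_distrib]
      have h1 : ∑ j ∈ Finset.range (n-1), (if Proper (x.eraseIdx j) then (0:ℝ) else 1) * e j
          = ∑ j ∈ Finset.range (n-2), (if Proper (x.eraseIdx (j+1)) then (0:ℝ) else 1) * e (j+1) := by
        rw [show n - 1 = (n-2)+1 by omega, Finset.sum_range_succ']
        have hp0 : Proper (x.eraseIdx 0) := by
          by_contra h
          have := (bad_spec hx h).1
          omega
        rw [if_pos hp0]; ring
      have h2 : ∑ j ∈ Finset.range (n-1), (if Proper (x.eraseIdx (j+1)) then (0:ℝ) else 1) * e j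
          = ∑ j ∈ Finset.range (n-2), (if Proper (x.eraseIdx (j+1)) then (0:ℝ) else 1) * e j := by
        rw [show n - 1 = (n-2)+1 by omega, Finset.sum_range_succ]
        have hpn : Proper (x.eraseIdx (n-2+1)) := by
          by_contra h
          have := (bad_spec hx h).2.1
          omega
        rw [if_pos hpn]; ring
      rw [h1, h2, ← Finset.sum_sub_distrib]
      apply Finset.sum_eq_zero
      intro j hj
      by_cases hpj : Proper (x.eraseIdx (j+1))
      · rw [if_pos hpj]; ring
      · obtain ⟨h1j, h2j, hej⟩ := bad_spec hx hpj
        rw [show j+1-1 = j by omega] at hej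
        have hz : (x.eraseIdx j).eraseIdx j = (x.eraseIdx (j+1)).eraseIdx (j+1) :=
          erase2_eq (by rwa [show j+1+1 = j+2 from rfl] at hej)
        simp only [he]
        rw [hz]; ring
    -- assemble
    have hDnA : D ↑q (n:ℤ) *
        (∑ i ∈ Finset.range n, D ↑q ((n:ℤ) - 2*(i:ℤ) - 1) * P q (x.eraseIdx i)) = 0 := by
      rw [stepA, ← Finset.sum_product (f := F)]
      have h2S : (2:ℝ) * ∑ p ∈ rect, F p = ∑ p ∈ rect, (F p + F (σ p)) := by
        rw [Finset.sum_add_distrib, ← hre, two_mul]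
      have hz2 : (2:ℝ) * ∑ p ∈ rect, F p = 0 := by
        rw [h2S, stepC, stepD]; ring
      have hz3 : ∑ p ∈ rect, F p = 0 := by linarith
      exact hz3
    rcases mul_eq_zero.mp hDnA with h | h
    · exact absurd h hDn
    · exact h
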